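/- Let m be a positive integer and let x be a real number with 0 < x < 2π. Then ∑_{n=1}^∞ cos(nx)/n^{2m-1} = ((-1)^{m-1} (2π)^{2m-2}/(2m-2)!) · ( ζ'(2-2m, 1 - x/(2π)) + ζ'(2-2m, x/(2π)) ). -/

import Mathlib

open Filter Topology Finset Real

/-- The Hurwitz zeta function `ζ(s, a)` for a real parameter `a > 0`: the meromorphic
continuation in `s` of the series `∑ k : ℕ, (k + a) ^ (-s)` (convergent for `Re s > 1`).
For `0 < a ≤ 1` it is Mathlib's `HurwitzZeta.hurwitzZeta`; for larger `a` it is obtained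
through the recurrence `ζ(s, a) = ζ(s, a + 1) + a ^ (-s)`. -/
noncomputable def hzeta (s : ℂ) (a : ℝ) : ℂ :=
  HurwitzZeta.hurwitzZeta (a : UnitAddCircle) s -
    ∑ j ∈ Finset.range (⌈a⌉₊ - 1), ((a : ℂ) - ((⌈a⌉₊ : ℂ) - 1) + j) ^ (-s)


open Complex HurwitzZeta

noncomputable def Cp (x : ℝ) (N : ℕ) : ℂ := ∑ n ∈ Finset.range N, (Real.cos ((n + 1) * x) : ℂ)

lemma norm_Cp_le (x : ℝ) (hx : Complex.exp (x * Complex.I) ≠ 1) (N : ℕ) :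
    ‖Cp x N‖ ≤ 2 / ‖1 - Complex.exp (x * Complex.I)‖ := by
  set z := Complex.exp (x * Complex.I) with hz
  have hz1 : ‖z‖ = 1 := Complex.norm_exp_ofReal_mul_I x
  have key : Cp x N = (((∑ n ∈ Finset.range N, z ^ (n+1)).re : ℝ) : ℂ) := by
    rw [Complex.re_sum, Complex.ofReal_sum, Cp]
    refine Finset.sum_congr rfl fun n _ => ?_
    rw [hz, ← Complex.exp_nat_mul]
    rw [show ((n+1:ℕ):ℂ) * (x * Complex.I) = (((n:ℝ)+1) * x : ℝ) * Complex.I by push_cast; ring]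
    rw [Complex.exp_ofReal_mul_I_re]
  rw [key]
  have h1 : ‖(∑ n ∈ Finset.range N, z ^ (n+1))‖ ≤ 2 / ‖1 - z‖ := by
    have : ∑ n ∈ Finset.range N, z ^ (n+1) = z * ((z ^ N - 1) / (z - 1)) := by
      rw [← geom_sum_eq hx, Finset.mul_sum]
      exact Finset.sum_congr rfl fun n _ => by ring_nf
    rw [this, norm_mul, hz1, one_mul, norm_div]
    rw [norm_sub_rev (1:ℂ) z]
    gcongr
    calc ‖z ^ N - 1‖ ≤ ‖z ^ N‖ + ‖(1:ℂ)‖ := norm_sub_le _ _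
    _ = 2 := by rw [norm_pow, hz1, one_pow, norm_one]; norm_num
  calc ‖(((∑ n ∈ Finset.range N, z ^ (n+1)).re : ℝ) : ℂ)‖
      = |(∑ n ∈ Finset.range N, z ^ (n+1)).re| := by rw [Complex.norm_real, Real.norm_eq_abs]
    _ ≤ ‖(∑ n ∈ Finset.range N, z ^ (n+1))‖ := Complex.abs_re_le_norm _
    _ ≤ _ := h1

lemma norm_vdiff_le (s : ℂ) (hs : 0 < s.re) (n : ℕ) :
    ‖((n:ℂ)+1)^(-s) - ((n:ℂ)+2)^(-s)‖ ≤ ‖s‖ * ((n:ℝ)+1) ^ (-s.re - 1) := by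
  have h1 : ∀ t : ℝ, t ∈ Set.Icc ((n:ℝ)+1) ((n:ℝ)+2) →
      HasDerivWithinAt (fun t : ℝ => ((t:ℂ)) ^ (-s)) (-s * ((t:ℂ)) ^ (-s-1))
        (Set.Icc ((n:ℝ)+1) ((n:ℝ)+2)) t := by
    intro t ht
    have htpos : (0:ℝ) < t := lt_of_lt_of_le (by positivity) ht.1
    have : HasDerivAt (fun z : ℂ => z ^ (-s)) (-s * ((t:ℂ)) ^ (-s-1)) ((t:ℂ)) :=
      (Complex.hasStrictDerivAt_cpow_const (by
        exact Complex.mem_slitPlane_iff.mpr (Or.inl (by simpa using htpos)))).hasDerivAt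
    exact this.comp_ofReal.hasDerivWithinAt
  have hbound : ∀ t : ℝ, t ∈ Set.Icc ((n:ℝ)+1) ((n:ℝ)+2) →
      ‖-s * ((t:ℂ)) ^ (-s-1)‖ ≤ ‖s‖ * ((n:ℝ)+1) ^ (-s.re - 1) := by
    intro t ht
    have htpos : (0:ℝ) < t := lt_of_lt_of_le (by positivity) ht.1
    rw [norm_mul, norm_neg]
    gcongr
    rw [Complex.norm_cpow_eq_rpow_re_of_pos htpos]
    have : (-s-1).re = -s.re - 1 := by simp
    rw [this]
    exact Real.rpow_le_rpow_of_nonpos (by positivity) ht.1 (by linarith)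
  have key := (convex_Icc ((n:ℝ)+1) ((n:ℝ)+2)).norm_image_sub_le_of_norm_hasDerivWithin_le
    h1 hbound (Set.left_mem_Icc.mpr (by linarith)) (Set.right_mem_Icc.mpr (by linarith))
  have e1 : (((((n:ℝ)+1)) : ℝ) : ℂ) = (n:ℂ)+1 := by push_cast; ring
  have e2 : (((((n:ℝ)+2)) : ℝ) : ℂ) = (n:ℂ)+2 := by push_cast; ring
  rw [e1, e2] at key
  have : ‖((n:ℝ)+2) - ((n:ℝ)+1)‖ = 1 := by norm_num
  rw [this, mul_one] at key
  calc ‖((n:ℂ)+1)^(-s) - ((n:ℂ)+2)^(-s)‖ = ‖((n:ℂ)+2)^(-s) - ((n:ℂ)+1)^(-s)‖ := norm_sub_rev _ _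
    _ ≤ _ := key

lemma summable_aux (x : ℝ) (hx : Complex.exp (x * Complex.I) ≠ 1) {s : ℂ} (hs : 0 < s.re) :
    Summable (fun n : ℕ => Cp x (n+1) * (((n:ℂ)+1)^(-s) - ((n:ℂ)+2)^(-s))) := by
  set B := 2 / ‖1 - Complex.exp (x * Complex.I)‖ with hB
  apply Summable.of_norm
  have hsum : Summable (fun n : ℕ => B * ‖s‖ * ((n:ℝ)+1) ^ (-s.re - 1)) := by
    apply Summable.mul_left
    have : Summable (fun n : ℕ => ((n:ℝ)) ^ (-s.re - 1)) :=
      (Real.summable_nat_rpow (p := -s.re - 1)).mpr (by linarith)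
    have := (summable_nat_add_iff 1).mpr this
    refine this.congr fun n => ?_
    push_cast
    ring_nf
  refine Summable.of_nonneg_of_le (fun n => norm_nonneg _) (fun n => ?_) hsum
  rw [norm_mul, mul_assoc]
  gcongr
  · exact norm_Cp_le x hx (n+1)
  · exact norm_vdiff_le s hs n

noncomputable def gg (x : ℝ) (s : ℂ) : ℂ :=
  ∑' n : ℕ, Cp x (n+1) * (((n:ℂ)+1)^(-s) - ((n:ℂ)+2)^(-s))

lemma tendsto_partial (x : ℝ) (hx : Complex.exp (x * Complex.I) ≠ 1) {s : ℂ} (hs : 0 < s.re) :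
    Tendsto (fun N : ℕ => ∑ n ∈ Finset.range N,
        (Real.cos ((n + 1) * x) : ℂ) * ((n:ℂ)+1)^(-s)) atTop (𝓝 (gg x s)) := by
  have hident : ∀ N : ℕ, ∑ n ∈ Finset.range N, (Real.cos ((n + 1) * x) : ℂ) * ((n:ℂ)+1)^(-s)
      = (∑ n ∈ Finset.range N, Cp x (n+1) * (((n:ℂ)+1)^(-s) - ((n:ℂ)+2)^(-s)))
        + Cp x N * ((N:ℂ)+1)^(-s) := by
    intro N
    have tel := Finset.sum_range_sub (fun n : ℕ => Cp x n * ((n:ℂ)+1)^(-s)) N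
    have hterm : ∀ n : ℕ, (Real.cos ((n + 1) * x) : ℂ) * ((n:ℂ)+1)^(-s)
        - Cp x (n+1) * (((n:ℂ)+1)^(-s) - ((n:ℂ)+2)^(-s))
        = Cp x (n+1) * (((n+1:ℕ):ℂ)+1)^(-s) - Cp x n * ((n:ℂ)+1)^(-s) := by
      intro n
      have hsucc : Cp x (n+1) = Cp x n + (Real.cos ((n + 1) * x) : ℂ) :=
        Finset.sum_range_succ _ n
      rw [hsucc]
      push_cast
      ring_nf
    have := Finset.sum_sub_distrib (s := Finset.range N)
      (f := fun n : ℕ => (Real.cos ((n + 1) * x) : ℂ) * ((n:ℂ)+1)^(-s))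
      (g := fun n : ℕ => Cp x (n+1) * (((n:ℂ)+1)^(-s) - ((n:ℂ)+2)^(-s)))
    rw [Finset.sum_congr rfl (fun n _ => hterm n), tel] at this
    have h0 : Cp x 0 = 0 := by simp [Cp]
    rw [h0, zero_mul, sub_zero] at this
    linear_combination -this
  simp_rw [hident]
  have h1 : Tendsto (fun N : ℕ => ∑ n ∈ Finset.range N,
      Cp x (n+1) * (((n:ℂ)+1)^(-s) - ((n:ℂ)+2)^(-s))) atTop (𝓝 (gg x s)) :=
    (summable_aux x hx hs).hasSum.tendsto_sum_nat
  have h2 : Tendsto (fun N : ℕ => Cp x N * ((N:ℂ)+1)^(-s)) atTop (𝓝 0) := by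
    have hb : ∀ N : ℕ, ‖Cp x N * ((N:ℂ)+1)^(-s)‖ ≤
        (2 / ‖1 - Complex.exp (x * Complex.I)‖) * ((N:ℝ)+1) ^ (-s.re) := by
      intro N
      rw [norm_mul]
      gcongr
      · exact norm_Cp_le x hx N
      · rw [show ((N:ℂ)+1) = ((((N:ℝ)+1) : ℝ) : ℂ) by push_cast; ring,
          Complex.norm_cpow_eq_rpow_re_of_pos (by positivity)]
        simp
    have hg : Tendsto (fun N : ℕ => (2 / ‖1 - Complex.exp (x * Complex.I)‖) *
        ((N:ℝ)+1) ^ (-s.re)) atTop (𝓝 0) := by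
      rw [show (0:ℝ) = (2 / ‖1 - Complex.exp (x * Complex.I)‖) * 0 by ring]
      apply Tendsto.const_mul
      have := tendsto_rpow_neg_atTop hs
      exact this.comp ((tendsto_natCast_atTop_atTop (R := ℝ)).atTop_add tendsto_const_nhds)
    exact squeeze_zero_norm hb hg
  simpa using h1.add h2

lemma tendsto_partial_cosZeta (a : ℝ) {s : ℂ} (hs : 1 < s.re) :
    Tendsto (fun N : ℕ => ∑ n ∈ Finset.range N,
        (Real.cos ((n + 1) * (2 * π * a)) : ℂ) * ((n:ℂ)+1)^(-s)) atTop
      (𝓝 (cosZeta a s)) := by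
  have h := (hasSum_nat_cosZeta a hs).tendsto_sum_nat
  have h' := h.comp (tendsto_add_atTop_nat 1)
  have heq : ∀ N : ℕ, (∑ n ∈ Finset.range (N + 1),
      (Real.cos (2 * π * a * n) : ℂ) / (n:ℂ) ^ s)
      = ∑ n ∈ Finset.range N, (Real.cos ((n + 1) * (2 * π * a)) : ℂ) * ((n:ℂ)+1)^(-s) := by
    intro N
    rw [Finset.sum_range_succ']
    have hs0 : s ≠ 0 := fun h => by rw [h] at hs; norm_num at hs
    have h0 : (Real.cos (2 * π * a * ((0:ℕ):ℝ)) : ℂ) / ((0:ℕ):ℂ) ^ s = 0 := by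
      norm_num [Complex.zero_cpow hs0]
    rw [h0, add_zero]
    refine Finset.sum_congr rfl fun n _ => ?_
    rw [Complex.cpow_neg, div_eq_mul_inv]
    congr 2
    · congr 1
      push_cast
      ring
    · push_cast
      ring
  exact (h'.congr heq)

set_option maxHeartbeats 1000000 in
lemma gg_eq_cosZeta (a : ℝ) (hx : Complex.exp (((2 * π * a : ℝ) : ℂ) * Complex.I) ≠ 1)
    {s : ℂ} (hs : 1 < s.re) : gg (2 * π * a) s = cosZeta a s := by
  have h1 := tendsto_partial (2 * π * a) hx (s := s) (by linarith)
  have h2 := tendsto_partial_cosZeta a hs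
  exact tendsto_nhds_unique h1 h2

lemma continuousAt_gg (x : ℝ) (hx : Complex.exp ((x : ℝ) * Complex.I) ≠ 1) :
    ContinuousAt (gg x) 1 := by
  set B := 2 / ‖1 - Complex.exp ((x:ℝ) * Complex.I)‖ with hB
  have hB0 : 0 ≤ B := by positivity
  set S := Metric.ball (1:ℂ) (4⁻¹) with hS
  have hmem : ∀ s ∈ S, (3/4 : ℝ) ≤ s.re ∧ ‖s‖ ≤ 2 := by
    intro s hs
    rw [hS, Metric.mem_ball, Complex.dist_eq] at hs
    constructor
    · have := Complex.abs_re_le_norm (s - 1)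
      rw [Complex.sub_re, Complex.one_re] at this
      have h2 := abs_le.mp (this.trans hs.le)
      linarith [h2.1]
    · have h1 : ‖s - 1‖ < 4⁻¹ := by exact hs
      calc ‖s‖ = ‖(s - 1) + 1‖ := by ring_nf
      _ ≤ ‖s - 1‖ + ‖(1:ℂ)‖ := norm_add_le _ _
      _ ≤ 2 := by rw [norm_one]; linarith
  have hu : Summable (fun n : ℕ => B * 2 * ((n:ℝ)+1) ^ (-(7/4 : ℝ))) := by
    apply Summable.mul_left
    have : Summable (fun n : ℕ => ((n:ℝ)) ^ (-(7/4:ℝ))) :=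
      (Real.summable_nat_rpow (p := -(7/4:ℝ))).mpr (by norm_num)
    have := (summable_nat_add_iff 1).mpr this
    refine this.congr fun n => ?_
    push_cast
    ring_nf
  have htu : TendstoUniformlyOn (fun N : ℕ => fun s : ℂ => ∑ n ∈ Finset.range N,
      Cp x (n+1) * (((n:ℂ)+1)^(-s) - ((n:ℂ)+2)^(-s)))
      (fun s : ℂ => ∑' n : ℕ, Cp x (n+1) * (((n:ℂ)+1)^(-s) - ((n:ℂ)+2)^(-s))) atTop S := by
    apply tendstoUniformlyOn_tsum_nat hu
    intro n s hs
    obtain ⟨hre, hnorm⟩ := hmem s hs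
    rw [norm_mul]
    calc ‖Cp x (n+1)‖ * ‖((n:ℂ)+1)^(-s) - ((n:ℂ)+2)^(-s)‖
        ≤ B * (‖s‖ * ((n:ℝ)+1) ^ (-s.re - 1)) := by
          gcongr
          · exact norm_Cp_le x hx (n+1)
          · exact norm_vdiff_le s (by linarith) n
      _ ≤ B * (2 * ((n:ℝ)+1) ^ (-(7/4:ℝ))) := by
          apply mul_le_mul_of_nonneg_left ?_ hB0
          apply mul_le_mul hnorm
          · apply Real.rpow_le_rpow_of_exponent_le
            · have : (0:ℝ) ≤ n := Nat.cast_nonneg n; linarith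
            · linarith
          · exact Real.rpow_nonneg (by positivity) _
          · norm_num
      _ = B * 2 * ((n:ℝ)+1) ^ (-(7/4:ℝ)) := by ring
  have hcontN : ∀ N : ℕ, Continuous (fun s : ℂ => ∑ n ∈ Finset.range N,
      Cp x (n+1) * (((n:ℂ)+1)^(-s) - ((n:ℂ)+2)^(-s))) := by
    intro N
    apply continuous_finset_sum
    intro n _
    apply Continuous.mul continuous_const
    apply Continuous.sub
    · exact Continuous.const_cpow continuous_neg (Or.inl (Nat.cast_add_one_ne_zero n))
    · refine Continuous.const_cpow continuous_neg (Or.inl ?_)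
      intro h
      have h2 := congrArg Complex.re h
      simp at h2
      linarith [Nat.cast_nonneg (α := ℝ) n]
  have hcont : ContinuousOn (gg x) S := by
    have := htu.continuousOn (Filter.Eventually.of_forall
      (fun N => (hcontN N).continuousOn)).frequently
    exact this
  exact hcont.continuousAt (Metric.ball_mem_nhds 1 (by norm_num))

lemma exp_ne_one_aux {x : ℝ} (hx0 : 0 < x) (hx1 : x < 2 * π) :
    Complex.exp ((x : ℝ) * Complex.I) ≠ 1 := by
  intro h
  rw [Complex.exp_eq_one_iff] at h
  obtain ⟨n, hn⟩ := h
  have hI : ((x:ℂ)) = n * (2 * π) := by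
    have hn' : (x:ℂ) * Complex.I = ((n:ℂ) * (2*π)) * Complex.I := by rw [hn]; ring
    exact mul_right_cancel₀ Complex.I_ne_zero hn' 
  have hx : x = (n : ℝ) * (2 * π) := by exact_mod_cast hI
  have hpi : 0 < π := Real.pi_pos
  rcases le_or_gt n 0 with hle | hlt
  · have : (n:ℝ) * (2 * π) ≤ 0 := mul_nonpos_of_nonpos_of_nonneg (by exact_mod_cast hle)
      (by positivity)
    linarith [hx ▸ hx0]
  · have h1 : (1:ℝ) ≤ (n:ℝ) := by exact_mod_cast hlt
    nlinarith [hx ▸ hx1]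

lemma gg_one_eq (a : ℝ) (ha : (a : UnitAddCircle) ≠ 0)
    (hx : Complex.exp (((2 * π * a : ℝ) : ℂ) * Complex.I) ≠ 1) :
    gg (2 * π * a) 1 = cosZeta a 1 := by
  have hseq : Tendsto (fun k : ℕ => (1 + (((k:ℝ)+2)⁻¹ : ℝ) : ℂ)) atTop (𝓝 1) := by
    have h0 : Tendsto (fun k : ℕ => (((k:ℝ)+2)⁻¹ : ℝ)) atTop (𝓝 0) := by
      apply tendsto_inv_atTop_zero.comp
      exact (tendsto_natCast_atTop_atTop (R := ℝ)).atTop_add tendsto_const_nhds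
    have := ((Complex.continuous_ofReal.tendsto 0).comp h0).const_add (1:ℂ)
    simpa using this
  have hre : ∀ k : ℕ, (1 < ((1 + (((k:ℝ)+2)⁻¹ : ℝ) : ℂ)).re) := by
    intro k
    simp only [Complex.add_re, Complex.one_re, Complex.ofReal_re]
    have : (0:ℝ) < ((k:ℝ)+2)⁻¹ := by positivity
    linarith
  have heq : ∀ k : ℕ, gg (2 * π * a) (1 + (((k:ℝ)+2)⁻¹ : ℝ) : ℂ)
      = cosZeta a (1 + (((k:ℝ)+2)⁻¹ : ℝ) : ℂ) := fun k => gg_eq_cosZeta a hx (hre k)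
  have h1 : Tendsto (fun k : ℕ => gg (2 * π * a) (1 + (((k:ℝ)+2)⁻¹ : ℝ) : ℂ)) atTop
      (𝓝 (gg (2 * π * a) 1)) := (continuousAt_gg _ hx).tendsto.comp hseq
  have h2 : Tendsto (fun k : ℕ => cosZeta a (1 + (((k:ℝ)+2)⁻¹ : ℝ) : ℂ)) atTop
      (𝓝 (cosZeta a 1)) :=
    ((differentiableAt_cosZeta a (Or.inr ha)).continuousAt.tendsto).comp hseq
  exact tendsto_nhds_unique (h1.congr heq) h2

lemma coe_ne_zero_aux {a : ℝ} (ha0 : 0 < a) (ha1 : a < 1) : (↑a : UnitAddCircle) ≠ 0 := by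
  intro h
  rw [AddCircle.coe_eq_zero_of_pos_iff 1 one_pos ha0] at h
  obtain ⟨n, hn⟩ := h
  have hna : (n : ℝ) = a := by rw [← hn]; simp [nsmul_eq_mul]
  rcases Nat.eq_zero_or_pos n with h0 | h1
  · rw [h0] at hna; simp at hna; linarith
  · have : (1:ℝ) ≤ (n:ℝ) := by exact_mod_cast h1
    linarith

lemma tendsto_cos_series {a : ℝ} (ha0 : 0 < a) (ha1 : a < 1) (k : ℕ) (hk : 1 ≤ k) :
    Tendsto (fun N : ℕ => ∑ n ∈ Finset.range N,
        (Real.cos ((n + 1) * (2 * π * a)) : ℂ) / ((n:ℂ)+1) ^ k) atTop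
      (𝓝 (cosZeta (↑a) ((k:ℕ) : ℂ))) := by
  have hpi : 0 < π := Real.pi_pos
  have hx0 : 0 < 2 * π * a := by positivity
  have hx1 : 2 * π * a < 2 * π := by nlinarith
  have hexp : Complex.exp (((2 * π * a : ℝ) : ℂ) * Complex.I) ≠ 1 := exp_ne_one_aux hx0 hx1
  have hre : (0:ℝ) < ((k:ℕ) : ℂ).re := by
    simp only [Complex.natCast_re]
    exact_mod_cast hk.trans_lt' (by norm_num)
  have hmain := tendsto_partial (2 * π * a) hexp (s := ((k:ℕ):ℂ)) hre
  have hgg : gg (2 * π * a) ((k:ℕ):ℂ) = cosZeta (↑a) ((k:ℕ):ℂ) := by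
    rcases eq_or_lt_of_le hk with h1 | h2
    · rw [← h1]
      push_cast
      exact gg_one_eq a (coe_ne_zero_aux ha0 ha1) hexp
    · exact gg_eq_cosZeta a hexp (by
        simp only [Complex.natCast_re]; exact_mod_cast h2)
  rw [hgg] at hmain
  refine hmain.congr fun N => Finset.sum_congr rfl fun n _ => ?_
  rw [Complex.cpow_neg, Complex.cpow_natCast, div_eq_mul_inv]

lemma hzeta_fun_eq (a : ℝ) (ha0 : 0 < a) (ha1 : a ≤ 1) :
    (fun s : ℂ => hzeta s a) = hurwitzZeta (↑a) := by
  funext s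
  rw [hzeta, show ⌈a⌉₊ = 1 from (Nat.ceil_eq_iff one_ne_zero).mpr
    ⟨by simpa using ha0, by simpa using ha1⟩]
  simp

lemma rhs_eq (m : ℕ) (hm : 0 < m) (a : ℝ) (ha0 : 0 < a) (ha1 : a < 1) :
    (-1 : ℂ) ^ (m - 1) * (2 * (π : ℂ)) ^ (2 * m - 2) / (Nat.factorial (2 * m - 2) : ℂ) *
      (deriv (fun s => hzeta s (1 - a)) (2 - 2 * (m : ℂ)) +
        deriv (fun s => hzeta s a) (2 - 2 * (m : ℂ)))
    = cosZeta (↑a) (((2 * m - 1 : ℕ) : ℂ)) := by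
  have hm1 : (1:ℝ) ≤ m := by exact_mod_cast hm
  have hπ : (0:ℝ) < π := Real.pi_pos
  have hane : (↑a : UnitAddCircle) ≠ 0 := coe_ne_zero_aux ha0 ha1
  set s₀ : ℂ := 2 - 2 * (m : ℂ) with hs₀
  have hs₀re : s₀.re = 2 - 2 * m := by simp [hs₀]
  have hs₀ne1 : s₀ ≠ 1 := by
    intro h
    have := congrArg Complex.re h
    rw [hs₀re] at this
    simp at this
    linarith
  have hcoe : ((1 - a : ℝ) : UnitAddCircle) = -(↑a : UnitAddCircle) := by
    rw [show (1 - a : ℝ) = -a + 1 by ring]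
    rw [AddCircle.coe_add_period 1 (-a), AddCircle.coe_neg]
  -- reduce hzeta to hurwitzZeta
  have hz1 : (fun s : ℂ => hzeta s (1 - a)) = hurwitzZeta (-(↑a : UnitAddCircle)) := by
    rw [hzeta_fun_eq (1 - a) (by linarith) (by linarith), hcoe]
  have hz2 : (fun s : ℂ => hzeta s a) = hurwitzZeta (↑a) := hzeta_fun_eq a ha0 ha1.le
  rw [hz1, hz2]
  -- reduce sum of derivatives to the even part
  have hd1 : DifferentiableAt ℂ (hurwitzZeta (-(↑a : UnitAddCircle))) s₀ :=
    differentiableAt_hurwitzZeta _ hs₀ne1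
  have hd2 : DifferentiableAt ℂ (hurwitzZeta (↑a : UnitAddCircle)) s₀ :=
    differentiableAt_hurwitzZeta _ hs₀ne1
  have hsum : deriv (hurwitzZeta (-(↑a : UnitAddCircle))) s₀ + deriv (hurwitzZeta (↑a)) s₀
      = 2 * deriv (hurwitzZetaEven (↑a)) s₀ := by
    rw [← deriv_add hd1 hd2]
    have hfe : (fun w => hurwitzZeta (-(↑a : UnitAddCircle)) w + hurwitzZeta (↑a) w)
        = fun w => 2 * hurwitzZetaEven (↑a) w := by
      funext w
      rw [hurwitzZeta, hurwitzZeta, hurwitzZetaEven_neg, hurwitzZetaOdd_neg]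
      ring
    rw [show hurwitzZeta (-(↑a : UnitAddCircle)) + hurwitzZeta (↑a) = fun w => hurwitzZeta (-(↑a : UnitAddCircle)) w + hurwitzZeta (↑a) w from rfl, hfe, deriv_const_mul 2 (differentiableAt_hurwitzZetaEven _ hs₀ne1)]
  rw [hsum]
  -- the functional-equation expression
  set G : ℂ → ℂ := fun w => (2 * (2 * (π:ℂ)) ^ (-(1 - w)) * Complex.Gamma (1 - w)
      * cosZeta (↑a) (1 - w)) * Complex.cos ((π:ℂ) * (1 - w) / 2) with hG
  have hEfe : hurwitzZetaEven (↑a : UnitAddCircle) =ᶠ[𝓝 s₀] G := by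
    have hopen : IsOpen {w : ℂ | w.re < 1} := isOpen_lt Complex.continuous_re continuous_const
    have hmem : s₀ ∈ {w : ℂ | w.re < 1} := by
      simp only [Set.mem_setOf_eq, hs₀re]; linarith
    filter_upwards [hopen.mem_nhds hmem] with w hw
    have h1 : ∀ n : ℕ, (1 - w) ≠ -(n:ℂ) := by
      intro n h
      have := congrArg Complex.re h
      simp only [Complex.sub_re, Complex.one_re, Complex.neg_re, Complex.natCast_re] at this
      have hw' : w.re < 1 := hw
      have hn : (0:ℝ) ≤ n := Nat.cast_nonneg n
      linarith
    have key := hurwitzZetaEven_one_sub (↑a : UnitAddCircle) h1 (Or.inl hane)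
    rw [show (1 : ℂ) - (1 - w) = w by ring] at key
    rw [key, hG]
    ring
  rw [hEfe.deriv_eq]
  -- derivative of G at s₀
  have hone_sub : (1:ℂ) - s₀ = 2 * (m:ℂ) - 1 := by rw [hs₀]; ring
  have hcast : ((2 * m - 1 : ℕ) : ℂ) = 2 * (m:ℂ) - 1 := by
    push_cast [Nat.cast_sub (by omega : 1 ≤ 2 * m)]
    ring
  have hGamma_arg : ∀ n : ℕ, (1 - s₀) ≠ -(n:ℂ) := by
    intro n h
    rw [hone_sub] at h
    have := congrArg Complex.re h
    simp only [Complex.sub_re, Complex.mul_re, Complex.neg_re, Complex.natCast_re,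
      Complex.ofReal_re] at this
    simp at this
    have hn : (0:ℝ) ≤ n := Nat.cast_nonneg n
    linarith
  have h2πne : (2 * (π:ℂ)) ≠ 0 := by
    simp only [ne_eq, mul_eq_zero, Complex.ofReal_eq_zero]
    push_neg
    exact ⟨two_ne_zero, hπ.ne'⟩
  have hP : DifferentiableAt ℂ (fun w : ℂ => 2 * (2 * (π:ℂ)) ^ (-(1 - w))
      * Complex.Gamma (1 - w) * cosZeta (↑a) (1 - w)) s₀ := by
    have hlin : DifferentiableAt ℂ (fun w : ℂ => 1 - w) s₀ :=
      (differentiable_const (1:ℂ)).differentiableAt.sub differentiable_id.differentiableAt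
    have h1 : DifferentiableAt ℂ (fun w : ℂ => 2 * (2 * (π:ℂ)) ^ (-(1 - w))) s₀ :=
      (hlin.neg.const_cpow (Or.inl h2πne)).const_mul 2
    have h2 : DifferentiableAt ℂ (fun w : ℂ => Complex.Gamma (1 - w)) s₀ :=
      (Complex.differentiableAt_Gamma _ hGamma_arg).comp s₀ hlin
    have h3 : DifferentiableAt ℂ (fun w : ℂ => cosZeta (↑a) (1 - w)) s₀ :=
      (differentiableAt_cosZeta (↑a) (Or.inr hane)).comp s₀ hlin
    exact (h1.mul h2).mul h3
  have hCder : HasDerivAt (fun w : ℂ => Complex.cos ((π:ℂ) * (1 - w) / 2))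
      (-Complex.sin ((π:ℂ) * (1 - s₀) / 2) * ((π:ℂ) * (-1) / 2)) s₀ := by
    have hinner : HasDerivAt (fun w : ℂ => (π:ℂ) * (1 - w) / 2) ((π:ℂ) * (-1) / 2) s₀ :=
      (((hasDerivAt_id s₀).const_sub 1).const_mul (π:ℂ)).div_const 2
    exact (Complex.hasDerivAt_cos _).comp s₀ hinner
  have hGder : HasDerivAt G
      (deriv (fun w : ℂ => 2 * (2 * (π:ℂ)) ^ (-(1 - w)) * Complex.Gamma (1 - w)
        * cosZeta (↑a) (1 - w)) s₀ * Complex.cos ((π:ℂ) * (1 - s₀) / 2)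
      + (2 * (2 * (π:ℂ)) ^ (-(1 - s₀)) * Complex.Gamma (1 - s₀) * cosZeta (↑a) (1 - s₀))
        * (-Complex.sin ((π:ℂ) * (1 - s₀) / 2) * ((π:ℂ) * (-1) / 2))) s₀ :=
    hP.hasDerivAt.mul hCder
  rw [hGder.deriv]
  -- evaluate the trigonometric factors
  have hcos0 : Complex.cos ((π:ℂ) * (1 - s₀) / 2) = 0 := by
    rw [hone_sub, show (π:ℂ) * (2 * (m:ℂ) - 1) / 2 = ((((m:ℕ):ℝ) * π - π / 2 : ℝ) : ℂ) by
      push_cast; ring, ← Complex.ofReal_cos, Real.cos_nat_mul_pi_sub, Real.cos_pi_div_two]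
    simp
  have hsin : Complex.sin ((π:ℂ) * (1 - s₀) / 2) = -(-1:ℂ)^m := by
    rw [hone_sub, show (π:ℂ) * (2 * (m:ℂ) - 1) / 2 = ((((m:ℕ):ℝ) * π - π / 2 : ℝ) : ℂ) by
      push_cast; ring, ← Complex.ofReal_sin, Real.sin_nat_mul_pi_sub, Real.sin_pi_div_two]
    push_cast
    ring
  -- evaluate Gamma and the power
  have hGammaval : Complex.Gamma (1 - s₀) = ((2 * m - 2).factorial : ℂ) := by
    rw [hone_sub, show 2 * (m:ℂ) - 1 = ((2 * m - 2 : ℕ) : ℂ) + 1 by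
      push_cast [Nat.cast_sub (by omega : 2 ≤ 2 * m)]; ring]
    exact Complex.Gamma_nat_eq_factorial _
  have hpowval : (2 * (π:ℂ)) ^ (-(1 - s₀)) = ((2 * (π:ℂ)) ^ (2 * m - 1 : ℕ))⁻¹ := by
    rw [hone_sub, ← hcast, Complex.cpow_neg, Complex.cpow_natCast]
  have hZarg : cosZeta (↑a : UnitAddCircle) (1 - s₀) = cosZeta (↑a) ((2 * m - 1 : ℕ) : ℂ) := by
    rw [hone_sub, hcast]
  rw [hcos0, mul_zero, zero_add, hsin, hGammaval, hpowval, hZarg]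
  -- final algebra
  set Z := cosZeta (↑a : UnitAddCircle) ((2 * m - 1 : ℕ) : ℂ) with hZ
  set F : ℂ := ((2 * m - 2).factorial : ℂ) with hF
  set A : ℂ := (2 * (π:ℂ)) ^ (2 * m - 2 : ℕ) with hA
  set W : ℂ := (2 * (π:ℂ)) ^ (2 * m - 1 : ℕ) with hW
  have hFne : F ≠ 0 := by
    rw [hF]
    exact_mod_cast Nat.cast_ne_zero.mpr (Nat.factorial_ne_zero _)
  have hWne : W ≠ 0 := pow_ne_zero _ h2πne
  have hAW : A * (2 * (π:ℂ)) = W := by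
    rw [hA, hW, ← pow_succ]
    congr 1
    omega
  have hsign : (-1:ℂ)^(m-1) * (-1:ℂ)^m = -1 := by
    rw [← pow_add, show m - 1 + m = 2 * (m - 1) + 1 by omega, pow_succ, pow_mul]
    simp
  have hWinv : W * W⁻¹ = 1 := mul_inv_cancel₀ hWne
  have hFinv : F * F⁻¹ = 1 := mul_inv_cancel₀ hFne
  linear_combination (-2*(π:ℂ)*(-1:ℂ)^(m-1)*(-1:ℂ)^m*A*W⁻¹*Z) * hFinv
    + (-2*(π:ℂ)*A*W⁻¹*Z) * hsign + (W⁻¹*Z) * hAW + Z * hWinv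


/-- For a positive integer `m` and `0 < x < 2π`,
`∑_{n=1}^∞ cos(nx)/n^(2m-1) = ((-1)^(m-1) (2π)^(2m-2)/(2m-2)!) ·
  (ζ'(2-2m, 1 - x/(2π)) + ζ'(2-2m, x/(2π)))`. -/
theorem cos_series_odd_exponent_closed_form (m : ℕ) (hm : 0 < m)
    (x : ℝ) (hx0 : 0 < x) (hx1 : x < 2 * π) :
    Filter.Tendsto
      (fun N : ℕ => ∑ n ∈ Finset.range N,
        (Real.cos ((n + 1) * x) : ℂ) / ((n : ℂ) + 1) ^ (2 * m - 1))
      Filter.atTop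
      (𝓝 ((-1) ^ (m - 1) * (2 * (π : ℂ)) ^ (2 * m - 2) / (Nat.factorial (2 * m - 2) : ℂ) *
        (deriv (fun s => hzeta s (1 - x / (2 * π))) (2 - 2 * (m : ℂ)) +
          deriv (fun s => hzeta s (x / (2 * π))) (2 - 2 * (m : ℂ))))) := by
  have hπ : (0:ℝ) < π := Real.pi_pos
  set a := x / (2 * π) with ha
  have ha0 : 0 < a := by positivity
  have ha1 : a < 1 := by rw [ha, div_lt_one (by positivity)]; exact hx1
  have hxa : x = 2 * π * a := by rw [ha]; field_simp
  rw [rhs_eq m hm a ha0 ha1]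
  have hmain := tendsto_cos_series ha0 ha1 (2 * m - 1) (by omega)
  rw [← hxa] at hmain
  exact hmain
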